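/- A Laurent polynomial f(t) ∈ ℤ[t, t⁻¹] satisfies f(1) = 0 and f'(1) = 0 if and only if f is a ℤ-linear combination (with nonnegative integer coefficients allowed on each of the four families) of the polynomials g_k(t) = t^k − k·t + (k−1) and their images under t ↦ t^{−1} and negation; equivalently, the set {f ∈ ℤ[t,t⁻¹] : f(1) = 0, f'(1) = 0} is the subgroup of ℤ[t,t⁻¹] generated by {t^k − k·t + (k−1) : k ∈ ℤ}. -/

import Mathlib

open Finset LaurentPolynomial

/-- A Gauss diagram, abstracted as a finite set of signed chords together with the
asymmetric relation `ltr d c` : "chord `d` crosses chord `c` from left to right"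
(so `ltr c d` means `d` crosses `c` from right to left). -/
structure GaussDiagram where
  Chord : Type
  [instFintype : Fintype Chord]
  [instDecEq : DecidableEq Chord]
  w : Chord → ℤ
  sign : ∀ c, w c = 1 ∨ w c = -1
  ltr : Chord → Chord → Prop
  [instDecRel : DecidableRel ltr]
  irrefl : ∀ c, ¬ ltr c c
  asymm : ∀ c d, ltr c d → ¬ ltr d c

attribute [instance] GaussDiagram.instFintype GaussDiagram.instDecEq GaussDiagram.instDecRel

/-- The chord index `Ind c = r₊(c) − r₋(c) − l₊(c) + l₋(c)`. -/
def GaussDiagram.Ind (G : GaussDiagram) (c : G.Chord) : ℤ :=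
  (∑ d ∈ univ.filter (fun d => G.ltr d c), G.w d)
    - (∑ d ∈ univ.filter (fun d => G.ltr c d), G.w d)

/-- The writhe polynomial `W_G(t) = ∑_c w(c) t^{Ind(c)} − ∑_c w(c)`. -/
noncomputable def GaussDiagram.W (G : GaussDiagram) : LaurentPolynomial ℤ :=
  (∑ c, C (G.w c) * T (G.Ind c)) - C (∑ c, G.w c)

/-- Evaluation of a Laurent polynomial at `t = 1` (the sum of its coefficients). -/
def evalOne (f : LaurentPolynomial ℤ) : ℤ := f.coeff.sum fun _ a => a

/-- Evaluation of the formal derivative of a Laurent polynomial at `t = 1`. -/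
def derivOne (f : LaurentPolynomial ℤ) : ℤ := f.coeff.sum fun n a => n * a


noncomputable def evalOneHom : LaurentPolynomial ℤ →+ ℤ :=
  (Finsupp.liftAddHom fun _ => AddMonoidHom.id ℤ).comp
    AddMonoidAlgebra.coeffAddEquiv.toAddMonoidHom
noncomputable def derivOneHom : LaurentPolynomial ℤ →+ ℤ :=
  (Finsupp.liftAddHom fun n => AddMonoidHom.mul n).comp
    AddMonoidAlgebra.coeffAddEquiv.toAddMonoidHom

theorem evalOneHom_apply (f : LaurentPolynomial ℤ) : evalOneHom f = evalOne f := rfl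
theorem derivOneHom_apply (f : LaurentPolynomial ℤ) : derivOneHom f = derivOne f := rfl

theorem evalOneHom_single (n : ℤ) (a : ℤ) : evalOneHom (AddMonoidAlgebra.single n a) = a := by
  show Finsupp.liftAddHom _ (Finsupp.single n a) = a
  erw [Finsupp.liftAddHom_apply_single]; rfl
theorem derivOneHom_single (n : ℤ) (a : ℤ) : derivOneHom (AddMonoidAlgebra.single n a) = n * a := by
  show Finsupp.liftAddHom _ (Finsupp.single n a) = n * a
  erw [Finsupp.liftAddHom_apply_single]; rfl

theorem amaSingle_finset_sum (s : Finset ℤ) (a : ℤ) (g : ℤ → ℤ) :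
    AddMonoidAlgebra.single a (∑ n ∈ s, g n) = ∑ n ∈ s, AddMonoidAlgebra.single a (g n) :=
  map_sum (AddMonoidAlgebra.singleAddHom a) g s

theorem evalOneHom_gen (k : ℤ) : evalOneHom (T k - C k * T 1 + C (k - 1)) = 0 := by
  rw [map_add, map_sub]
  rw [show (T k : LaurentPolynomial ℤ) = AddMonoidAlgebra.single k 1 from rfl,
     ← single_eq_C_mul_T, ← single_eq_C]
  rw [evalOneHom_single, evalOneHom_single, evalOneHom_single]
  ring

theorem derivOneHom_gen (k : ℤ) : derivOneHom (T k - C k * T 1 + C (k - 1)) = 0 := by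
  rw [map_add, map_sub]
  rw [show (T k : LaurentPolynomial ℤ) = AddMonoidAlgebra.single k 1 from rfl,
     ← single_eq_C_mul_T, ← single_eq_C]
  rw [derivOneHom_single, derivOneHom_single, derivOneHom_single]
  ring


/-- A Laurent polynomial `f ∈ ℤ[t,t⁻¹]` satisfies `f(1) = 0` and `f'(1) = 0` if and only if
it lies in the additive subgroup generated by the polynomials `t^k − k·t + (k−1)`, `k ∈ ℤ`. -/
theorem eval_one_eq_zero_and_deriv_one_eq_zero_iff (f : LaurentPolynomial ℤ) :
    (evalOne f = 0 ∧ derivOne f = 0) ↔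
      f ∈ AddSubgroup.closure
        {g : LaurentPolynomial ℤ | ∃ k : ℤ, g = T k - C k * T 1 + C (k - 1)} := by
  constructor
  · rintro ⟨h1, h2⟩
    have e1 : evalOne f = ∑ n ∈ f.coeff.support, f.coeff n := rfl
    have e2 : derivOne f = ∑ n ∈ f.coeff.support, n * f.coeff n := rfl
    have key : f = ∑ n ∈ f.coeff.support, f.coeff n • ((T n : LaurentPolynomial ℤ) - C n * T 1 + C (n-1)) := by
      have hterm : ∀ n : ℤ, f.coeff n • ((T n : LaurentPolynomial ℤ) - C n * T 1 + C (n-1))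
          = AddMonoidAlgebra.single n (f.coeff n) - AddMonoidAlgebra.single 1 (f.coeff n * n)
            + AddMonoidAlgebra.single 0 (f.coeff n * (n-1)) := by
        intro n
        rw [show (T n : LaurentPolynomial ℤ) = AddMonoidAlgebra.single n 1 from rfl,
          ← single_eq_C_mul_T, ← single_eq_C, smul_add, smul_sub, AddMonoidAlgebra.smul_single,
          AddMonoidAlgebra.smul_single, AddMonoidAlgebra.smul_single, smul_eq_mul, smul_eq_mul, smul_eq_mul, mul_one]
      simp_rw [hterm]
      rw [Finset.sum_add_distrib, Finset.sum_sub_distrib,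
        ← amaSingle_finset_sum, ← amaSingle_finset_sum]
      have hd : ∑ n ∈ f.coeff.support, f.coeff n * n = 0 := by
        rw [← h2, e2]; exact Finset.sum_congr rfl fun n _ => mul_comm _ _
      have hc : ∑ n ∈ f.coeff.support, f.coeff n * (n - 1) = 0 := by
        have : ∑ n ∈ f.coeff.support, f.coeff n * (n - 1)
            = (∑ n ∈ f.coeff.support, f.coeff n * n) - ∑ n ∈ f.coeff.support, f.coeff n := by
          rw [← Finset.sum_sub_distrib]; exact Finset.sum_congr rfl fun n _ => by ring
        rw [this, hd, ← e1, h1]; ring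
      rw [hd, hc, AddMonoidAlgebra.single_zero, AddMonoidAlgebra.single_zero, sub_zero, add_zero]
      exact (AddMonoidAlgebra.sum_coeff_single f).symm
    rw [key]
    exact AddSubgroup.sum_mem _ fun n _ =>
      AddSubgroup.zsmul_mem _ (AddSubgroup.subset_closure (by exact ⟨n, rfl⟩)) _
  · intro hf
    have hsub : {g : LaurentPolynomial ℤ | ∃ k : ℤ, g = T k - C k * T 1 + C (k - 1)}
        ⊆ ↑(evalOneHom.ker ⊓ derivOneHom.ker) := by
      rintro g ⟨k, rfl⟩
      exact AddSubgroup.mem_inf.mpr ⟨evalOneHom_gen k, derivOneHom_gen k⟩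
    have h := AddSubgroup.mem_inf.mp (AddSubgroup.closure_le _ |>.mpr hsub hf)
    exact ⟨h.1, h.2⟩
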